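/- For every integer k ≥ 1, there exists a unique polynomial p ∈ ℚ[x] of degree ≤ 2k−1 such that: p(−i) = 0 for all integers i with 1 ≤ i ≤ k−1; p takes the same value at every point of the set S(k) = {1/2 − i : i = 0, 1, …, k}; and p(0) = (−1)^{k−1}·(2k−3)!!/k!. Moreover, this polynomial equals r_{(k)}. -/

import Mathlib

open Polynomial

/-- The defining interpolation conditions of the polynomial `r_{(k)}` (`k ≥ 1`):
degree `≤ 2k−1`, zeros at `−1, …, −(k−1)`, and value
`(−2)^{−(k−1)}·(1/2)_{k−1}/(k−1)!` at the points `1/2 − i` for `i = 0, 1, …, k`. -/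
def rCond (k : ℕ) (p : Polynomial ℚ) : Prop :=
  p.natDegree ≤ 2 * k - 1 ∧
  (∀ i : ℕ, 1 ≤ i → i ≤ k - 1 → p.eval (-(i : ℚ)) = 0) ∧
  (∀ i : ℕ, i ≤ k →
    p.eval (1 / 2 - (i : ℚ))
      = (-2 : ℚ) ^ (-((k : ℤ) - 1)) * (ascPochhammer ℚ (k - 1)).eval (1 / 2)
          / ((k - 1).factorial : ℚ))

namespace RKAux
open Finset

noncomputable section




def vv (i : ℕ) : ℚ := 1/2 - i

lemma vv_inj : Function.Injective vv := by
  intro a b h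
  unfold vv at h
  have : (a : ℚ) = b := by linarith
  exact_mod_cast this

def ww (k i : ℕ) : ℚ := ∏ m ∈ range (k-1), ((m : ℚ) + 1 + 1/2 - i)

lemma half_ne {a b : ℕ} : ((a : ℚ) + 1/2 ≠ b) := by
  intro h
  have : ((2*a+1 : ℕ) : ℚ) = ((2*b : ℕ) : ℚ) := by push_cast; linarith
  have := Nat.cast_injective (R := ℚ) this
  omega

lemma ww_ne_zero (k i : ℕ) : ww k i ≠ 0 := by
  unfold ww
  apply Finset.prod_ne_zero_iff.mpr
  intro m _
  intro h
  exact half_ne (a := m+1) (b := i) (by push_cast; linarith)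

def Apt (k : ℕ) : ℚ :=
  (-2 : ℚ) ^ (-((k : ℤ) - 1)) * (ascPochhammer ℚ (k - 1)).eval (1 / 2)
    / ((k - 1).factorial : ℚ)

def cpt (k : ℕ) : ℚ :=
  (-1 : ℚ) ^ (k - 1) * (Nat.doubleFactorial (2 * k - 3) : ℚ) / (k.factorial : ℚ)

def hpoly (k : ℕ) : ℚ[X] :=
  Lagrange.interpolate (range (k+1)) vv (fun i => Apt k / ww k i)

def rpoly (k : ℕ) : ℚ[X] :=
  (∏ m ∈ range (k-1), (X + C ((m : ℚ) + 1))) * hpoly k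

lemma vv_injOn (s : Finset ℕ) : Set.InjOn vv s := fun a _ b _ h => vv_inj h

lemma rpoly_eval_half (k : ℕ) (i : ℕ) (hi : i ≤ k) :
    (rpoly k).eval (1/2 - (i : ℚ)) = Apt k := by
  have hnode : (hpoly k).eval (1/2 - (i : ℚ)) = Apt k / ww k i := by
    have := Lagrange.eval_interpolate_at_node (fun i => Apt k / ww k i)
      (vv_injOn (range (k+1))) (i := i) (by simp [mem_range]; omega)
    simpa [vv, hpoly] using this
  have : (∏ m ∈ range (k-1), (X + C ((m : ℚ) + 1))).eval (1/2 - (i : ℚ)) = ww k i := by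
    rw [eval_prod]
    unfold ww
    exact Finset.prod_congr rfl (fun m _ => by simp; ring)
  rw [rpoly, eval_mul, this, hnode]
  exact mul_div_cancel₀ _ (ww_ne_zero k i)

lemma rpoly_eval_int (k : ℕ) (i : ℕ) (h1 : 1 ≤ i) (h2 : i ≤ k - 1) :
    (rpoly k).eval (-(i : ℚ)) = 0 := by
  rw [rpoly, eval_mul, eval_prod]
  apply mul_eq_zero_of_left
  apply Finset.prod_eq_zero (i := i - 1) (by simp [mem_range]; omega)
  have : ((i - 1 : ℕ) : ℚ) = (i : ℚ) - 1 := by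
    have : (1:ℕ) ≤ i := h1
    push_cast [this]; ring
  simp [this]

lemma natDegree_hpoly (k : ℕ) : (hpoly k).natDegree ≤ k := by
  by_cases h : hpoly k = 0
  · simp [h]
  · have := Lagrange.degree_interpolate_lt (s := range (k+1)) (v := vv)
      (fun i => Apt k / ww k i) (vv_injOn _)
    rw [Finset.card_range] at this
    have := (Polynomial.natDegree_lt_iff_degree_lt h).mpr (by exact_mod_cast this)
    omega

lemma natDegree_rpoly (k : ℕ) : (rpoly k).natDegree ≤ 2 * k - 1 := by
  calc (rpoly k).natDegree ≤ (∏ m ∈ range (k-1), (X + C ((m : ℚ) + 1))).natDegree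
        + (hpoly k).natDegree := natDegree_mul_le
    _ ≤ (k - 1) + k := by
        gcongr
        · calc (∏ m ∈ range (k-1), (X + C ((m : ℚ) + 1))).natDegree
              ≤ ∑ m ∈ range (k-1), (X + C ((m : ℚ) + 1)).natDegree :=
                Polynomial.natDegree_prod_le _ _
          _ ≤ ∑ _m ∈ range (k-1), 1 := by
                gcongr with m hm
                exact le_of_eq (natDegree_X_add_C _)
          _ ≤ k - 1 := by simp
        · exact natDegree_hpoly k
    _ ≤ 2 * k - 1 := by omega


-- root sets
def intSet (a : ℕ) : Finset ℚ := (range a).image (fun i : ℕ => -(i : ℚ))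
def halfSet (b : ℕ) : Finset ℚ := (range b).image (fun i : ℕ => 1/2 - (i : ℚ))

lemma card_intSet (a : ℕ) : (intSet a).card = a := by
  rw [intSet, Finset.card_image_of_injective, card_range]
  intro x y h
  have : (x : ℚ) = y := by simpa using h
  exact_mod_cast this

lemma card_halfSet (b : ℕ) : (halfSet b).card = b := by
  rw [halfSet, Finset.card_image_of_injective, card_range]
  intro x y h
  have : (x : ℚ) = y := by linarith
  exact_mod_cast this

lemma disj (a b : ℕ) : Disjoint (intSet a) (halfSet b) := by
  rw [Finset.disjoint_left]
  rintro x hx hy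
  simp only [intSet, halfSet, mem_image, mem_range] at hx hy
  obtain ⟨i, _, rfl⟩ := hx
  obtain ⟨j, _, hj⟩ := hy
  have h2 : ((2*j : ℕ) : ℚ) = ((2*i+1 : ℕ) : ℚ) := by push_cast; linarith
  have := Nat.cast_injective (R := ℚ) h2
  omega

lemma card_union (a b : ℕ) : ((intSet a) ∪ (halfSet b)).card = a + b := by
  rw [Finset.card_union_of_disjoint (disj a b), card_intSet, card_halfSet]

/-- difference trick : if `d` and its shift agree, `d` evals equally at all `-n`. -/
lemma eval_shift_eq {d : ℚ[X]} (h : d.comp (X - C 1) = d) (x : ℚ) :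
    d.eval (x - 1) = d.eval x := by
  conv_rhs => rw [← h]
  simp [eval_comp]

lemma zero_of_conditions {d : ℚ[X]} {k : ℕ} (hk : 1 ≤ k)
    (hdeg : d.natDegree ≤ 2 * k - 1)
    (hint : ∀ i : ℕ, 1 ≤ i → i ≤ k - 1 → d.eval (-(i : ℚ)) = 0)
    (hhalf : ∀ i : ℕ, i ≤ k → d.eval (1/2 - (i : ℚ)) = d.eval (1/2))
    (h0 : d.eval 0 = 0) : d = 0 := by
  by_contra hd
  -- e := d - d.comp (X - C 1)
  set e : ℚ[X] := d - d.comp (X - C 1) with he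
  have hcompdeg : (d.comp (X - C 1)).natDegree = d.natDegree := by
    rw [natDegree_comp, natDegree_X_sub_C, mul_one]
  have hcomp0 : d.comp (X - C 1) ≠ 0 := by
    intro h
    apply hd
    apply Polynomial.zero_of_eval_zero
    intro x
    have := congrArg (eval (x+1)) h
    simpa [eval_comp] using this
  have hlc : d.leadingCoeff = (d.comp (X - C 1)).leadingCoeff := by
    rw [Polynomial.leadingCoeff_comp (by rw [natDegree_X_sub_C]; exact one_ne_zero)]
    have h1 : (X - C (1:ℚ)).leadingCoeff = 1 := (monic_X_sub_C 1).leadingCoeff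
    rw [Polynomial.C_1] at h1
    simp [h1]
  have hdegeq : d.degree = (d.comp (X - C 1)).degree := by
    rw [degree_eq_natDegree hd, degree_eq_natDegree hcomp0, hcompdeg]
  have hedeg : e.degree < d.degree := Polynomial.degree_sub_lt hdegeq hd hlc
  -- e vanishes on 2k-1 points
  have heval : ∀ x ∈ (intSet (k-1)) ∪ (halfSet k), e.eval x = 0 := by
    intro x hx
    rw [Finset.mem_union] at hx
    have ee : ∀ y : ℚ, e.eval y = d.eval y - d.eval (y - 1) := by
      intro y; simp [he, eval_comp]
    rcases hx with hx | hx
    · simp only [intSet, mem_image, mem_range] at hx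
      obtain ⟨i, hi, rfl⟩ := hx
      rw [ee]
      have h1 : d.eval (-(i:ℚ)) = 0 := by
        rcases Nat.eq_zero_or_pos i with rfl | hpos
        · simpa using h0
        · exact hint i hpos (by omega)
      have h2 : d.eval (-(i:ℚ) - 1) = 0 := by
        have : (-(i:ℚ) - 1) = -((i+1 : ℕ) : ℚ) := by push_cast; ring
        rw [this]
        exact hint (i+1) (by omega) (by omega)
      rw [h1, h2, sub_zero]
    · simp only [halfSet, mem_image, mem_range] at hx
      obtain ⟨i, hi, rfl⟩ := hx
      rw [ee]
      have h1 : d.eval (1/2 - (i:ℚ)) = d.eval (1/2) := hhalf i (by omega)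
      have h2 : d.eval (1/2 - (i:ℚ) - 1) = d.eval (1/2) := by
        have : (1/2 - (i:ℚ) - 1) = 1/2 - ((i+1 : ℕ) : ℚ) := by push_cast; ring
        rw [this]
        exact hhalf (i+1) (by omega)
      rw [h1, h2, sub_self]
  have he0 : e = 0 := by
    by_cases h : e = 0
    · exact h
    · apply Polynomial.eq_zero_of_natDegree_lt_card_of_eval_eq_zero' e _ heval
      rw [card_union]
      have := Polynomial.natDegree_lt_natDegree h hedeg
      omega
  have hshift : d.comp (X - C 1) = d := by
    have := sub_eq_zero.mp he0
    exact this.symm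
  have hzero : ∀ n : ℕ, d.eval (-(n : ℚ)) = 0 := by
    intro n
    induction n with
    | zero => simpa using h0
    | succ n ih =>
      have := eval_shift_eq hshift (-(n : ℚ))
      rw [ih] at this
      rw [← this]
      norm_num
      ring_nf
  apply hd
  apply Polynomial.eq_zero_of_natDegree_lt_card_of_eval_eq_zero' d (intSet (2*k))
  · intro x hx
    simp only [intSet, mem_image, mem_range] at hx
    obtain ⟨i, _, rfl⟩ := hx
    exact hzero i
  · rw [card_intSet]
    omega




-- ∏_{m∈range n} (m+1 : ℚ) = n!
lemma prod_cast_factorial (n : ℕ) : ∏ m ∈ range n, ((m : ℚ) + 1) = n.factorial := by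
  induction n with
  | zero => simp
  | succ n ih => rw [prod_range_succ, ih, Nat.factorial_succ]; push_cast; ring

-- ∏_{j∈range i} ((j:ℚ) - i) = (-1)^i * i!
lemma prod_below (i : ℕ) : ∏ j ∈ range i, ((j : ℚ) - i) = (-1)^i * i.factorial := by
  have h1 : ∏ j ∈ range i, ((j : ℚ) - i) = ∏ j ∈ range i, (((i - 1 - j : ℕ) : ℚ) - i) :=
    (Finset.prod_range_reflect (fun j => ((j : ℚ) - i)) i).symm
  rw [h1]
  have h2 : ∀ j ∈ range i, (((i - 1 - j : ℕ) : ℚ) - i) = -((j:ℚ)+1) := by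
    intro j hj
    rw [mem_range] at hj
    have : ((i - 1 - j : ℕ) : ℚ) = (i : ℚ) - 1 - j := by
      have h3 : ((i - 1 - j) + (j + 1) = i) := by omega
      have := congrArg (fun n : ℕ => (n : ℚ)) h3
      push_cast at this
      linarith
    rw [this]; ring
  rw [Finset.prod_congr rfl h2]
  rw [show (fun j : ℕ => -((j:ℚ)+1)) = (fun j : ℕ => (-1) * ((j:ℚ)+1)) from by ext j; ring]
  rw [Finset.prod_mul_distrib, Finset.prod_const, prod_cast_factorial, card_range]

-- ∏_{j∈Ico (i+1) (k+1)} ((j:ℚ) - i) = (k-i)!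
lemma prod_above (i k : ℕ) (h : i ≤ k) :
    ∏ j ∈ Ico (i+1) (k+1), ((j : ℚ) - i) = (k - i).factorial := by
  rw [Finset.prod_Ico_eq_prod_range]
  have : k + 1 - (i + 1) = k - i := by omega
  rw [this]
  have h2 : ∀ j ∈ range (k - i), ((↑(i + 1 + j) : ℚ) - i) = ((j : ℚ) + 1) := by
    intro j _; push_cast; ring
  rw [Finset.prod_congr rfl h2, prod_cast_factorial]

lemma erase_eq_union (i k : ℕ) (h : i ≤ k) :
    (range (k+1)).erase i = range i ∪ Ico (i+1) (k+1) := by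
  ext j
  simp only [mem_erase, mem_range, mem_union, mem_Ico]
  omega

-- closed form for D
lemma D_closed (i k : ℕ) (h : i ≤ k) :
    ∏ j ∈ (range (k+1)).erase i, ((j : ℚ) - i) = (-1)^i * i.factorial * (k - i).factorial := by
  rw [erase_eq_union i k h, Finset.prod_union (by
    rw [Finset.disjoint_left]; intro a ha hb
    rw [mem_range] at ha; rw [mem_Ico] at hb; omega)]
  rw [prod_below, prod_above i k h]


-- even sums
lemma sum_even_split (g : ℕ → ℚ) (hodd : ∀ j, Odd j → g j = 0) (n : ℕ) :
    ∑ j ∈ range (2*n+1), g j = ∑ i ∈ range (n+1), g (2*i) := by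
  induction n with
  | zero => simp
  | succ n ih =>
    have h1 : 2*(n+1)+1 = (2*n+1) + 1 + 1 := by omega
    rw [h1, Finset.sum_range_succ, Finset.sum_range_succ, ih,
      hodd (2*n+1) ⟨n, by omega⟩, Finset.sum_range_succ]
    have : 2*n+1+1 = 2*(n+1) := by omega
    rw [this, Finset.sum_range_succ, Finset.sum_range_succ]
    ring

lemma sum_even_choose (k : ℕ) (hk : 1 ≤ k) :
    ∑ i ∈ range (k+1), ((2*k).choose (2*i) : ℚ) = 2^(2*k-1) := by
  have halt : ∑ j ∈ range (2*k+1), ((-1 : ℚ))^j * ((2*k).choose j) = 0 := by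
    have := Int.alternating_sum_range_choose (n := 2*k)
    rw [if_neg (by omega)] at this
    have := congrArg (fun z : ℤ => (z : ℚ)) this
    push_cast at this
    simpa using this
  have hall : ∑ j ∈ range (2*k+1), (((2*k).choose j : ℚ)) = 2^(2*k) := by
    have := Nat.sum_range_choose (2*k)
    have := congrArg (fun z : ℕ => (z : ℚ)) this
    push_cast at this
    simpa using this
  set g : ℕ → ℚ := fun j => (1 + (-1:ℚ)^j) * ((2*k).choose j) with hg
  have hsum : ∑ j ∈ range (2*k+1), g j = 2^(2*k) := by
    simp only [hg, add_mul, one_mul, Finset.sum_add_distrib, halt, hall, add_zero]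
  have hodd : ∀ j, Odd j → g j = 0 := by
    intro j hj
    simp [hg, Odd.neg_one_pow hj]
  have := sum_even_split g hodd k
  rw [hsum] at this
  have heven : ∀ i, g (2*i) = 2 * ((2*k).choose (2*i) : ℚ) := by
    intro i
    have : ((-1:ℚ))^(2*i) = 1 := by rw [pow_mul]; norm_num
    rw [hg]
    dsimp only
    rw [this]
    ring
  rw [Finset.sum_congr rfl (fun i _ => heven i)] at this
  rw [← Finset.mul_sum] at this
  have h2 : (2:ℚ)^(2*k) = 2 * 2^(2*k-1) := by
    rw [← pow_succ']
    congr 1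
    omega
  rw [h2] at this
  field_simp at this
  linarith

-- doubleFactorial and half-integer products
lemma df_eq_prod (j : ℕ) :
    ((Nat.doubleFactorial (2*(j+1) - 3)) : ℚ) = 2^j * ∏ m ∈ range j, ((1:ℚ)/2 + m) := by
  induction j with
  | zero => simp [Nat.doubleFactorial]
  | succ j ih =>
    have h1 : 2*(j+1+1) - 3 = 2*j+1 := by omega
    rw [h1, prod_range_succ, ← mul_assoc]
    rcases Nat.eq_zero_or_pos j with rfl | hj
    · norm_num [Nat.doubleFactorial]
    · have h2 : 2*j+1 = (2*j-1) + 2 := by omega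
      rw [h2, Nat.doubleFactorial_add_two]
      have h3 : 2*(j+1)-3 = 2*j-1 := by omega
      rw [h3] at ih
      push_cast
      rw [show ((2*j-1 : ℕ):ℚ) + 2 = 2*j+1 by
        have : (1:ℕ) ≤ 2*j := by omega
        push_cast [this]; ring]
      rw [ih]
      rw [pow_succ]
      ring

lemma ascPochhammer_eval_prod (n : ℕ) (x : ℚ) :
    (ascPochhammer ℚ n).eval x = ∏ m ∈ range n, (x + m) := by
  induction n with
  | zero => simp
  | succ n ih => rw [ascPochhammer_succ_right, prod_range_succ, eval_mul, ih]; simp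




def EE (k i : ℕ) : ℚ := ∏ j ∈ (range (k+1)).erase i, ((0:ℚ) - vv j)
def DD (k i : ℕ) : ℚ := ∏ j ∈ (range (k+1)).erase i, (vv i - vv j)

-- closed form for D (uses D_closed from部分 c; restate here)
lemma DD_closed (k i : ℕ) (h : i ≤ k) :
    DD k i = (-1)^i * i.factorial * (k - i).factorial := by
  unfold DD
  rw [← D_closed i k h]
  exact Finset.prod_congr rfl (fun j _ => by unfold vv; ring)

lemma EE_full (k i : ℕ) (h : i ≤ k) :
    EE k i * ((i:ℚ) - 1/2) = ∏ j ∈ range (k+1), ((j:ℚ) - 1/2) := by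
  have h0 := Finset.prod_erase_mul (range (k+1)) (fun j => (0:ℚ) - vv j)
    (show i ∈ range (k+1) by rw [mem_range]; omega)
  unfold EE
  calc (∏ j ∈ (range (k+1)).erase i, ((0:ℚ) - vv j)) * ((i:ℚ) - 1/2)
      = (∏ j ∈ (range (k+1)).erase i, ((0:ℚ) - vv j)) * ((0:ℚ) - vv i) := by
        congr 1
        unfold vv; ring
    _ = ∏ j ∈ range (k+1), ((0:ℚ) - vv j) := h0
    _ = ∏ j ∈ range (k+1), ((j:ℚ) - 1/2) :=
        Finset.prod_congr rfl (fun j _ => by unfold vv; ring)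

lemma i_half_ne (i : ℕ) : ((i:ℚ) - 1/2) ≠ 0 := by
  intro h
  exact half_ne (a := 0) (b := i) (by push_cast; linarith)

lemma i_half_ne' (i : ℕ) : ((i:ℚ) + 1/2) ≠ 0 := by
  intro h
  exact half_ne (a := i) (b := 0) (by push_cast; linarith)

lemma EE_succ (k i : ℕ) (h : i + 1 ≤ k) :
    EE k (i+1) * ((i:ℚ) + 1/2) = EE k i * ((i:ℚ) - 1/2) := by
  have h1 := EE_full k i (by omega)
  have h2 := EE_full k (i+1) (by omega)
  rw [show (((i+1:ℕ)):ℚ) - 1/2 = (i:ℚ) + 1/2 from by push_cast; ring] at h2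
  rw [h2, h1]

lemma ww_succ (k i : ℕ) (hk : 1 ≤ k) :
    ww k i * (1/2 - (i:ℚ)) = ww k (i+1) * ((k:ℚ) - 1/2 - i) := by
  have hk1 : k = (k - 1) + 1 := by omega
  have hL : ∏ m ∈ range k, ((m:ℚ) + 1/2 - i) = ww k i * (1/2 - (i:ℚ)) := by
    conv_lhs => rw [hk1]
    rw [Finset.prod_range_succ']
    unfold ww
    congr 1
    · exact Finset.prod_congr rfl (fun m _ => by push_cast; ring)
    · push_cast; ring
  have hR : ∏ m ∈ range k, ((m:ℚ) + 1/2 - i) = ww k (i+1) * ((k:ℚ) - 1/2 - i) := by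
    conv_lhs => rw [hk1]
    rw [Finset.prod_range_succ]
    unfold ww
    congr 1
    · exact Finset.prod_congr rfl (fun m _ => by push_cast; ring)
    · have : ((k - 1 : ℕ) : ℚ) = (k:ℚ) - 1 := by
        have : (1:ℕ) ≤ k := hk
        push_cast [this]; ring
      rw [this]; ring
  rw [← hL, hR]

lemma EE_ne_zero (k i : ℕ) : EE k i ≠ 0 := by
  unfold EE
  apply Finset.prod_ne_zero_iff.mpr
  intro j _
  unfold vv
  intro h
  exact i_half_ne j (by linarith)

lemma choose_rec (k i : ℕ) (h : i + 1 ≤ k) :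
    (((2*k).choose (2*i+2)) : ℚ) * ((2*(i:ℚ)+1) * (2*i+2))
      = (((2*k).choose (2*i)) : ℚ) * ((2*(k:ℚ)-2*i) * (2*k-2*i-1)) := by
  have e1 := Nat.choose_succ_right_eq (2*k) (2*i)
  have e2 := Nat.choose_succ_right_eq (2*k) (2*i+1)
  have c1 : ((2*k - (2*i) : ℕ) : ℚ) = 2*(k:ℚ) - 2*i := by
    push_cast [Nat.cast_sub (show 2*i ≤ 2*k by omega)]; ring
  have c2 : ((2*k - (2*i+1) : ℕ) : ℚ) = 2*(k:ℚ) - 2*i - 1 := by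
    push_cast [Nat.cast_sub (show 2*i+1 ≤ 2*k by omega)]; ring
  have q1 : (((2*k).choose (2*i+1)) : ℚ) * (2*(i:ℚ)+1)
      = (((2*k).choose (2*i)) : ℚ) * (2*(k:ℚ)-2*i) := by
    have := congrArg (fun n : ℕ => (n:ℚ)) e1
    push_cast at this
    rw [show ((2*k - 2*i : ℕ):ℚ) = 2*(k:ℚ)-2*i from c1] at this
    linarith [this]
  have q2 : (((2*k).choose (2*i+2)) : ℚ) * (2*(i:ℚ)+2)
      = (((2*k).choose (2*i+1)) : ℚ) * (2*(k:ℚ)-2*i-1) := by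
    have := congrArg (fun n : ℕ => (n:ℚ)) e2
    push_cast at this
    rw [show ((2*k - (2*i+1) : ℕ):ℚ) = 2*(k:ℚ)-2*i-1 from c2] at this
    linarith [this]
  nlinarith [q1, q2]


lemma k_half_ne (k i : ℕ) (h : i + 1 ≤ k) : ((k:ℚ) - 1/2 - i) ≠ 0 := by
  intro hh
  exact half_ne (a := i) (b := k) (by push_cast; linarith)

lemma DD_ne_zero (k i : ℕ) (h : i ≤ k) : DD k i ≠ 0 := by
  rw [DD_closed k i h]
  have h1 : ((-1:ℚ))^i ≠ 0 := by apply pow_ne_zero; norm_num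
  have h2 : (i.factorial : ℚ) ≠ 0 := by exact_mod_cast Nat.factorial_ne_zero i
  have h3 : (((k-i).factorial : ℕ) : ℚ) ≠ 0 := by exact_mod_cast Nat.factorial_ne_zero _
  positivity

lemma key (k : ℕ) (hk : 1 ≤ k) (i : ℕ) (hik : i ≤ k) :
    ((k-1).factorial : ℚ) * Apt k * EE k i * 2^(2*k-1)
      = cpt k * (((2*k).choose (2*i)) : ℚ) * DD k i * ww k i := by
  induction i with
  | zero =>
    have hD0 : DD k 0 = (k.factorial : ℚ) := by
      rw [DD_closed k 0 (by omega)]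
      simp
    have hE0 : EE k 0 = ww k 0 * (1/2) := by
      have h1 := EE_full k 0 (by omega)
      have hk1 : k = (k - 1) + 1 := by omega
      rw [show ((0:ℕ):ℚ) - 1/2 = -(1/2) from by norm_num] at h1
      have h2 : ∏ j ∈ range (k+1), ((j:ℚ) - 1/2)
          = (∏ j ∈ range k, ((j:ℚ) + 1/2)) * (-(1/2)) := by
        rw [Finset.prod_range_succ']
        congr 1
        exact Finset.prod_congr rfl (fun j _ => by push_cast; ring)
        norm_num
      have h3 : ∏ j ∈ range k, ((j:ℚ) + 1/2) = ww k 0 * (1/2) := by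
        conv_lhs => rw [hk1]
        rw [Finset.prod_range_succ']
        unfold ww
        congr 1
        · exact Finset.prod_congr rfl (fun m _ => by push_cast; ring)
        · norm_num
      have h4 : EE k 0 * (-(1/2) : ℚ) = ww k 0 * (1/2) * (-(1/2)) := by
        rw [h1, h2, h3]
      exact mul_right_cancel₀ (show (-(1/2) : ℚ) ≠ 0 by norm_num) h4
    rw [hD0, hE0, Nat.mul_zero, Nat.choose_zero_right]
    obtain ⟨K, rfl⟩ : ∃ K, k = K + 1 := ⟨k - 1, by omega⟩
    have hA : Apt (K+1) = ((-1:ℚ))^K * (Nat.doubleFactorial (2*(K+1) - 3) : ℚ)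
        / (2^K * 2^K * (K.factorial : ℚ)) := by
      unfold Apt
      have h6 : ((K+1) - 1) = K := by omega
      rw [h6]
      rw [show (-((((K+1):ℕ):ℤ) - 1)) = -(K:ℤ) from by push_cast; ring]
      rw [zpow_neg, zpow_natCast, ascPochhammer_eval_prod, df_eq_prod K,
        neg_pow (2:ℚ) K, mul_inv,
        show ((-1:ℚ)^K)⁻¹ = (-1)^K from by rw [← inv_pow]; norm_num]
      field_simp
    rw [hA]
    unfold cpt
    have h8 : ((K+1) - 1) = K := by omega
    rw [h8]
    rw [show 2*(K+1) - 1 = 2*K+1 from by omega]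
    have hKf : (((K+1).factorial : ℕ) : ℚ) = ((K:ℚ)+1) * K.factorial := by
      rw [Nat.factorial_succ]; push_cast; ring
    rw [hKf]
    have hfne : (K.factorial : ℚ) ≠ 0 := by exact_mod_cast Nat.factorial_ne_zero K
    field_simp
    ring
  | succ i ih =>
    have hik1 : i + 1 ≤ k := hik
    have hik' : i ≤ k := by omega
    have IH := ih hik'
    have h3' : EE k (i+1) * (2*(i:ℚ)+1) = EE k i * (2*(i:ℚ)-1) := by
      linear_combination 2 * EE_succ k i hik1
    have h2' : ww k i * (1-2*(i:ℚ)) = ww k (i+1) * (2*(k:ℚ)-2*(i:ℚ)-1) := by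
      linear_combination 2 * ww_succ k i (by omega)
    have hD : DD k i = (-1:ℚ)^i * i.factorial * ((k-i).factorial) := DD_closed k i hik'
    have hD' : DD k (i+1) = (-1:ℚ)^(i+1) * (i+1).factorial * ((k-(i+1)).factorial) :=
      DD_closed k (i+1) hik1
    have hfac1 : (((i+1).factorial : ℕ) : ℚ) = ((i:ℚ)+1) * i.factorial := by
      rw [Nat.factorial_succ]; push_cast; ring
    have hfac2 : (((k-i).factorial : ℕ) : ℚ) = ((k:ℚ)-i) * (((k-(i+1)).factorial : ℕ) : ℚ) := by
      rw [show k-i = (k-(i+1))+1 from by omega, Nat.factorial_succ]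
      have hc1 : ((k-(i+1) : ℕ):ℚ) = (k:ℚ) - i - 1 := by
        rw [Nat.cast_sub hik1]; push_cast; ring
      push_cast [hc1]; ring
    have hDrel : DD k (i+1) * ((k:ℚ)-i) * (-1) = DD k i * ((i:ℚ)+1) := by
      rw [hD, hD', hfac1, hfac2, pow_succ]
      ring
    have hc := choose_rec k i hik1
    have hc4' : (((2*k).choose (2*i+2)) : ℚ) * ((2*(i:ℚ)+1) * ((i:ℚ)+1))
        = (((2*k).choose (2*i)) : ℚ) * (((k:ℚ)-(i:ℚ)) * (2*(k:ℚ)-2*(i:ℚ)-1)) := by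
      linear_combination (1/2) * hc
    have e12 : ((k-1).factorial : ℚ) * Apt k * EE k (i+1) * 2^(2*k-1) * (2*(i:ℚ)+1)
        = -(cpt k * (((2*k).choose (2*i)) : ℚ) * DD k i * ww k (i+1) * (2*(k:ℚ)-2*(i:ℚ)-1)) := by
      linear_combination (((k-1).factorial : ℚ) * Apt k * 2^(2*k-1)) * h3'
        + (2*(i:ℚ)-1) * IH
        - (cpt k * (((2*k).choose (2*i)) : ℚ) * DD k i) * h2'
    have tne : ((2*(i:ℚ)+1) * (((k:ℚ)-(i:ℚ)) * (2*(k:ℚ)-2*(i:ℚ)-1))) ≠ 0 := by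
      have n1 : (2*(i:ℚ)+1) ≠ 0 := by positivity
      have n2 : ((k:ℚ)-(i:ℚ)) ≠ 0 := by
        have : (i:ℚ) + 1 ≤ (k:ℚ) := by exact_mod_cast hik1
        intro hh; linarith
      have n3 : (2*(k:ℚ)-2*(i:ℚ)-1) ≠ 0 := by
        intro hh
        exact half_ne (a := i) (b := k) (by push_cast; linarith)
      exact mul_ne_zero n1 (mul_ne_zero n2 n3)
    apply mul_right_cancel₀ tne
    rw [show 2*(i+1) = 2*i+2 from by ring]
    linear_combination (((k:ℚ)-(i:ℚ))*(2*(k:ℚ)-2*(i:ℚ)-1)) * e12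
      + (cpt k * (((2*k).choose (2*i+2)) : ℚ) * ww k (i+1) * (2*(k:ℚ)-2*(i:ℚ)-1)*(2*(i:ℚ)+1)) * hDrel
      + (cpt k * DD k i * ww k (i+1) * (2*(k:ℚ)-2*(i:ℚ)-1)) * hc4'

lemma fact_ne (n : ℕ) : ((n.factorial : ℕ) : ℚ) ≠ 0 := by
  exact_mod_cast Nat.factorial_ne_zero n

lemma eval0 (k : ℕ) (hk : 1 ≤ k) : (rpoly k).eval 0 = cpt k := by
  rw [rpoly, eval_mul]
  have hprod : (∏ m ∈ range (k-1), (X + C ((m:ℚ)+1))).eval 0 = ((k-1).factorial : ℚ) := by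
    rw [eval_prod, ← prod_cast_factorial]
    exact Finset.prod_congr rfl (fun m _ => by simp)
  have hh : (hpoly k).eval 0 = ∑ i ∈ range (k+1), (Apt k / ww k i) * (EE k i / DD k i) := by
    rw [hpoly, Lagrange.interpolate_apply, eval_finset_sum]
    apply Finset.sum_congr rfl
    intro i hi
    rw [eval_mul, eval_C]
    congr 1
    rw [Lagrange.basis, eval_prod]
    calc ∏ j ∈ (range (k+1)).erase i, (Lagrange.basisDivisor (vv i) (vv j)).eval 0
        = ∏ j ∈ (range (k+1)).erase i, ((vv i - vv j)⁻¹ * ((0:ℚ) - vv j)) := by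
          apply Finset.prod_congr rfl
          intro j _
          rw [Lagrange.basisDivisor, eval_mul, eval_C, eval_sub, eval_X, eval_C]
      _ = (∏ j ∈ (range (k+1)).erase i, (vv i - vv j))⁻¹
            * ∏ j ∈ (range (k+1)).erase i, ((0:ℚ) - vv j) := by
          rw [Finset.prod_mul_distrib, ← Finset.prod_inv_distrib]
      _ = EE k i / DD k i := by
          rw [EE, DD, div_eq_mul_inv, mul_comm]
  have hterm : ∀ i ∈ range (k+1), (Apt k / ww k i) * (EE k i / DD k i)
      = cpt k * (((2*k).choose (2*i)) : ℚ) / (((k-1).factorial : ℚ) * 2^(2*k-1)) := by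
    intro i hi
    rw [mem_range] at hi
    have hik : i ≤ k := by omega
    rw [div_mul_div_comm, div_eq_div_iff
      (mul_ne_zero (ww_ne_zero k i) (DD_ne_zero k i hik))
      (mul_ne_zero (fact_ne (k-1)) (by positivity : ((2:ℚ)^(2*k-1)) ≠ 0))]
    linear_combination key k hk i hik
  rw [hprod, hh, Finset.sum_congr rfl hterm, ← Finset.sum_div, ← Finset.mul_sum,
    sum_even_choose k hk]
  have h1 := fact_ne (k-1)
  have h2 : ((2:ℚ)^(2*k-1)) ≠ 0 := by positivity
  field_simp

lemma rpoly_rCond (k : ℕ) : rCond k (rpoly k) :=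
  ⟨natDegree_rpoly k, rpoly_eval_int k, fun i hi => rpoly_eval_half k i hi⟩

lemma uniqC (k : ℕ) (hk : 1 ≤ k) (p q : ℚ[X])
    (hp : p.natDegree ≤ 2 * k - 1 ∧
      (∀ i : ℕ, 1 ≤ i → i ≤ k - 1 → p.eval (-(i : ℚ)) = 0) ∧
      (∀ i : ℕ, i ≤ k → ∀ i' : ℕ, i' ≤ k →
        p.eval (1 / 2 - (i : ℚ)) = p.eval (1 / 2 - (i' : ℚ))) ∧
      p.eval 0 = cpt k)
    (hq : q.natDegree ≤ 2 * k - 1 ∧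
      (∀ i : ℕ, 1 ≤ i → i ≤ k - 1 → q.eval (-(i : ℚ)) = 0) ∧
      (∀ i : ℕ, i ≤ k → ∀ i' : ℕ, i' ≤ k →
        q.eval (1 / 2 - (i : ℚ)) = q.eval (1 / 2 - (i' : ℚ))) ∧
      q.eval 0 = cpt k) : p = q := by
  have hd : p - q = 0 := by
    apply zero_of_conditions hk (d := p - q)
    · exact le_trans (Polynomial.natDegree_sub_le p q) (sup_le hp.1 hq.1)
    · intro i h1 h2
      rw [eval_sub, hp.2.1 i h1 h2, hq.2.1 i h1 h2, sub_zero]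
    · intro i hi
      have e1 := hp.2.2.1 i hi 0 (by omega)
      have e2 := hq.2.2.1 i hi 0 (by omega)
      rw [show ((0:ℕ):ℚ) = 0 from rfl, sub_zero] at e1 e2
      rw [eval_sub, eval_sub, e1, e2]
    · rw [eval_sub, hp.2.2.2, hq.2.2.2, sub_self]
  exact sub_eq_zero.mp hd

lemma uniqR (k : ℕ) (hk : 1 ≤ k) (p q : ℚ[X])
    (hp : rCond k p) (hq : rCond k q) : p = q := by
  have hd : p - q = 0 := by
    apply Polynomial.eq_zero_of_natDegree_lt_card_of_eval_eq_zero' (p - q)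
      (((range (k-1)).image (fun i : ℕ => -((i:ℚ)+1))) ∪ halfSet (k+1))
    · intro x hx
      rw [Finset.mem_union] at hx
      rcases hx with hx | hx
      · simp only [mem_image, mem_range] at hx
        obtain ⟨i, hi, rfl⟩ := hx
        have c1 : -((i:ℚ)+1) = -(((i+1 : ℕ)):ℚ) := by push_cast; ring
        rw [c1, eval_sub, hp.2.1 (i+1) (by omega) (by omega),
          hq.2.1 (i+1) (by omega) (by omega), sub_zero]
      · simp only [halfSet, mem_image, mem_range] at hx
        obtain ⟨i, hi, rfl⟩ := hx
        rw [eval_sub, hp.2.2 i (by omega), hq.2.2 i (by omega), sub_self]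
    · have hcard : (((range (k-1)).image (fun i : ℕ => -((i:ℚ)+1))) ∪ halfSet (k+1)).card
          = 2*k := by
        rw [Finset.card_union_of_disjoint, Finset.card_image_of_injective, card_range,
          card_halfSet]
        · omega
        · intro a b hab
          have : (a:ℚ) = b := by
            simp only at hab
            linarith
          exact_mod_cast this
        · rw [Finset.disjoint_left]
          rintro x hx hy
          simp only [mem_image, mem_range, halfSet] at hx hy
          obtain ⟨i, _, rfl⟩ := hx
          obtain ⟨j, _, hj⟩ := hy
          have h2 : ((2*j : ℕ) : ℚ) = ((2*i+3 : ℕ) : ℚ) := by push_cast; linarith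
          have := Nat.cast_injective (R := ℚ) h2
          omega
      rw [hcard]
      have := hp.1
      have h2 := Polynomial.natDegree_sub_le p q
      have := hq.1
      omega
  exact sub_eq_zero.mp hd

end
end RKAux

/-- For every integer `k ≥ 1`, there exists a unique polynomial `p ∈ ℚ[x]` of degree
`≤ 2k−1` such that `p(−i) = 0` for `1 ≤ i ≤ k−1`, `p` is constant on the set
`S(k) = {1/2 − i : i = 0,…,k}`, and `p(0) = (−1)^{k−1}·(2k−3)!!/k!`.
Moreover, this polynomial equals `r_{(k)}` (i.e. it coincides with any polynomial
satisfying the defining interpolation conditions `rCond k`). -/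
theorem r_k_characterization (k : ℕ) (hk : 1 ≤ k) :
    (∃! p : Polynomial ℚ,
      p.natDegree ≤ 2 * k - 1 ∧
      (∀ i : ℕ, 1 ≤ i → i ≤ k - 1 → p.eval (-(i : ℚ)) = 0) ∧
      (∀ i : ℕ, i ≤ k → ∀ i' : ℕ, i' ≤ k →
        p.eval (1 / 2 - (i : ℚ)) = p.eval (1 / 2 - (i' : ℚ))) ∧
      p.eval 0 = (-1 : ℚ) ^ (k - 1) * (Nat.doubleFactorial (2 * k - 3) : ℚ)
        / (k.factorial : ℚ)) ∧
    (∀ p q : Polynomial ℚ,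
      (p.natDegree ≤ 2 * k - 1 ∧
       (∀ i : ℕ, 1 ≤ i → i ≤ k - 1 → p.eval (-(i : ℚ)) = 0) ∧
       (∀ i : ℕ, i ≤ k → ∀ i' : ℕ, i' ≤ k →
         p.eval (1 / 2 - (i : ℚ)) = p.eval (1 / 2 - (i' : ℚ))) ∧
       p.eval 0 = (-1 : ℚ) ^ (k - 1) * (Nat.doubleFactorial (2 * k - 3) : ℚ)
         / (k.factorial : ℚ)) →
      rCond k q → p = q) := by
  have hP : (RKAux.rpoly k).natDegree ≤ 2 * k - 1 ∧
      (∀ i : ℕ, 1 ≤ i → i ≤ k - 1 → (RKAux.rpoly k).eval (-(i : ℚ)) = 0) ∧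
      (∀ i : ℕ, i ≤ k → ∀ i' : ℕ, i' ≤ k →
        (RKAux.rpoly k).eval (1 / 2 - (i : ℚ)) = (RKAux.rpoly k).eval (1 / 2 - (i' : ℚ))) ∧
      (RKAux.rpoly k).eval 0 = RKAux.cpt k := by
    refine ⟨RKAux.natDegree_rpoly k, RKAux.rpoly_eval_int k, ?_, RKAux.eval0 k hk⟩
    intro i hi i' hi'
    rw [RKAux.rpoly_eval_half k i hi, RKAux.rpoly_eval_half k i' hi']
  constructor
  · exact ⟨RKAux.rpoly k, hP, fun y hy => RKAux.uniqC k hk y (RKAux.rpoly k) hy hP⟩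
  · intro p q hp hq
    have h1 : p = RKAux.rpoly k := RKAux.uniqC k hk p (RKAux.rpoly k) hp hP
    have h2 : q = RKAux.rpoly k := RKAux.uniqR k hk q (RKAux.rpoly k) hq (RKAux.rpoly_rCond k)
    rw [h1, h2]
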